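/- arXiv:2403.16411 — 3 statements merged into one kernel-verified Lean document; each statement's English description precedes it below -/
import Mathlib

section
/- Let 𝔸 be a real Banach algebra with unit 1. Define J : 𝔸 → 𝔸 by J(a) := ∑_{k=0}^∞ ((-1)^k/(k+1)!) • a^k (the series converges absolutely for every a). Then, as a → 0 in 𝔸, the map a ↦ J(a) - exp(-(1/2) • a) * (1 + (1/24) • a^2) is big-O of a ↦ ‖a‖^4; that is, there exist C > 0 and a neighbourhood of 0 on which ‖J(a) - exp(-(1/2)a) * (1 + (1/24)a^2)‖ ≤ C‖a‖^4. -/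
open scoped Nat Topology

section JacobianAux

variable {𝔸 : Type*} [NormedRing 𝔸] [NormedAlgebra ℝ 𝔸] [CompleteSpace 𝔸]

omit [NormedAlgebra ℝ 𝔸] [CompleteSpace 𝔸] in
lemma aux_norm_pow_le (a : 𝔸) (k : ℕ) :
    ‖a ^ k‖ ≤ max ‖(1 : 𝔸)‖ 1 * ‖a‖ ^ k := by
  cases k with
  | zero => simpa using le_max_left _ _
  | succ n =>
      calc ‖a ^ (n + 1)‖ ≤ ‖a‖ ^ (n + 1) := norm_pow_le' a n.succ_pos
      _ ≤ max ‖(1 : 𝔸)‖ 1 * ‖a‖ ^ (n + 1) := by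
          nlinarith [le_max_right ‖(1 : 𝔸)‖ 1, pow_nonneg (norm_nonneg a) (n + 1)]

omit [CompleteSpace 𝔸] in
lemma aux_summable (c : ℕ → ℝ) (hc : Summable fun k => |c k|) (a : 𝔸) (ha : ‖a‖ ≤ 1) :
    Summable fun k : ℕ => ‖c k • a ^ k‖ := by
  refine Summable.of_nonneg_of_le (fun k => norm_nonneg _) ?_ (hc.mul_right (max ‖(1 : 𝔸)‖ 1))
  intro k
  have hM : (0:ℝ) ≤ max ‖(1 : 𝔸)‖ 1 := le_trans zero_le_one (le_max_right _ _)
  calc ‖c k • a ^ k‖ = |c k| * ‖a ^ k‖ := by rw [norm_smul, Real.norm_eq_abs]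
  _ ≤ |c k| * (max ‖(1 : 𝔸)‖ 1 * ‖a‖ ^ k) :=
      mul_le_mul_of_nonneg_left (aux_norm_pow_le a k) (abs_nonneg _)
  _ ≤ |c k| * (max ‖(1 : 𝔸)‖ 1 * 1) :=
      mul_le_mul_of_nonneg_left
        (mul_le_mul_of_nonneg_left (pow_le_one₀ (norm_nonneg a) ha) hM) (abs_nonneg _)
  _ = |c k| * max ‖(1 : 𝔸)‖ 1 := by ring

/-- Generic tail bound for a power series with absolutely summable coefficients. -/
lemma tail_bound (c : ℕ → ℝ) (hc : Summable fun k => |c k|) (a : 𝔸) (ha : ‖a‖ ≤ 1) :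
    ‖(∑' k : ℕ, c k • a ^ k) - ∑ k ∈ Finset.range 4, c k • a ^ k‖ ≤
      (∑' k : ℕ, |c (k + 4)|) * ‖a‖ ^ 4 := by
  have hs : Summable fun k : ℕ => c k • a ^ k :=
    Summable.of_norm (aux_summable c hc a ha)
  have key : (∑' k : ℕ, c k • a ^ k) - ∑ k ∈ Finset.range 4, c k • a ^ k
      = ∑' k : ℕ, c (k + 4) • a ^ (k + 4) := by
    rw [← Summable.sum_add_tsum_nat_add 4 hs, add_sub_cancel_left]
  rw [key]
  have hb : ∀ k : ℕ, ‖c (k + 4) • a ^ (k + 4)‖ ≤ |c (k + 4)| * ‖a‖ ^ 4 := by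
    intro k
    calc ‖c (k + 4) • a ^ (k + 4)‖ = |c (k + 4)| * ‖a ^ (k + 4)‖ := by
          rw [norm_smul, Real.norm_eq_abs]
    _ ≤ |c (k + 4)| * ‖a‖ ^ (k + 4) := by gcongr; exact norm_pow_le' a (by omega)
    _ = |c (k + 4)| * (‖a‖ ^ 4 * ‖a‖ ^ k) := by rw [pow_add]; ring
    _ ≤ |c (k + 4)| * (‖a‖ ^ 4 * 1) :=
        mul_le_mul_of_nonneg_left
          (mul_le_mul_of_nonneg_left (pow_le_one₀ (norm_nonneg a) ha)
            (pow_nonneg (norm_nonneg a) 4)) (abs_nonneg _)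
    _ = |c (k + 4)| * ‖a‖ ^ 4 := by ring
  have hns : Summable fun k : ℕ => ‖c (k + 4) • a ^ (k + 4)‖ :=
    (summable_nat_add_iff 4).2 (aux_summable c hc a ha)
  calc ‖∑' k : ℕ, c (k + 4) • a ^ (k + 4)‖ ≤ ∑' k : ℕ, ‖c (k + 4) • a ^ (k + 4)‖ :=
        norm_tsum_le_tsum_norm hns
  _ ≤ ∑' k : ℕ, |c (k + 4)| * ‖a‖ ^ 4 := by
      refine Summable.tsum_le_tsum hb hns ?_
      exact ((summable_nat_add_iff 4).2 hc).mul_right _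
  _ = (∑' k : ℕ, |c (k + 4)|) * ‖a‖ ^ 4 := tsum_mul_right

omit [CompleteSpace 𝔸] in
lemma aux_poly (a : 𝔸) :
    (∑ k ∈ Finset.range 4, ((-1 : ℝ) ^ k / ((k + 1)! : ℝ)) • a ^ k) -
      (∑ k ∈ Finset.range 4, ((-(1/2) : ℝ) ^ k / (k ! : ℝ)) • a ^ k) * (1 + (1/24 : ℝ) • a ^ 2)
    = (-(1/192) : ℝ) • a ^ 4 + (1/1152 : ℝ) • a ^ 5 := by
  simp only [Finset.sum_range_succ, Finset.sum_range_zero, zero_add]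
  norm_num [Nat.factorial]
  simp only [mul_add, add_mul, mul_one, one_mul, smul_mul_assoc, mul_smul_comm, smul_smul,
    ← pow_add, ← pow_succ']
  norm_num
  simp only [← pow_succ', ← pow_add]
  norm_num
  module

lemma aux_exp_eq (a : 𝔸) :
    NormedSpace.exp (-((1 / 2 : ℝ) • a)) = ∑' k : ℕ, ((-(1/2) : ℝ) ^ k / (k ! : ℝ)) • a ^ k := by
  rw [NormedSpace.exp_eq_tsum ℝ]
  refine tsum_congr fun k => ?_
  rw [← neg_smul, smul_pow, smul_smul]
  congr 1
  field_simp

lemma aux_abs_c1 (k : ℕ) : |(-1 : ℝ) ^ k / ((k + 1)! : ℝ)| = 1 / ((k + 1)! : ℝ) := by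
  rw [abs_div, abs_pow, abs_neg, abs_one, one_pow, abs_of_nonneg (by positivity)]

lemma aux_abs_c2 (k : ℕ) : |(-(1/2) : ℝ) ^ k / (k ! : ℝ)| = (1/2 : ℝ) ^ k / (k ! : ℝ) := by
  rw [abs_div, abs_pow, abs_neg, abs_of_nonneg (by norm_num : (0:ℝ) ≤ 1/2),
    abs_of_nonneg (by positivity)]

lemma aux_summable_c1 : Summable fun k : ℕ => |(-1 : ℝ) ^ k / ((k + 1)! : ℝ)| := by
  refine Summable.of_nonneg_of_le (fun k => abs_nonneg _) (fun k => ?_)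
    (Real.summable_pow_div_factorial 1)
  rw [aux_abs_c1, one_pow]
  have hle : (k ! : ℝ) ≤ ((k + 1)! : ℝ) := by exact_mod_cast Nat.factorial_le (Nat.le_succ k)
  exact one_div_le_one_div_of_le (by positivity) hle

lemma aux_summable_c2 : Summable fun k : ℕ => |(-(1/2) : ℝ) ^ k / (k ! : ℝ)| := by
  refine Summable.of_nonneg_of_le (fun k => abs_nonneg _) (fun k => ?_)
    (Real.summable_pow_div_factorial 1)
  rw [aux_abs_c2, one_pow]
  have h : ((1:ℝ)/2) ^ k ≤ 1 := pow_le_one₀ (by norm_num) (by norm_num)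
  have hk : (0:ℝ) < (k ! : ℝ) := by exact_mod_cast k.factorial_pos
  exact div_le_div_of_nonneg_right h hk.le

end JacobianAux

/-- In a real Banach algebra `𝔸`, let `J a := ∑_k ((-1)^k/(k+1)!) • a^k` (the series converges
absolutely for every `a`).  Then, as `a → 0`, the difference
`J a - exp (-(1/2) • a) * (1 + (1/24) • a^2)` is big-O of `‖a‖^4`: there exist `C > 0` and a
neighbourhood of `0` on which `‖J a - exp (-(1/2) • a) * (1 + (1/24) • a^2)‖ ≤ C * ‖a‖^4`. -/
theorem jacobian_parallelTransport_curvature_approx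
    (𝔸 : Type*) [NormedRing 𝔸] [NormedAlgebra ℝ 𝔸] [CompleteSpace 𝔸]
    (J : 𝔸 → 𝔸) (hJ : ∀ a : 𝔸, J a = ∑' k : ℕ, ((-1 : ℝ) ^ k / ((k + 1)! : ℝ)) • a ^ k) :
    (∀ a : 𝔸, Summable fun k : ℕ => ‖((-1 : ℝ) ^ k / ((k + 1)! : ℝ)) • a ^ k‖) ∧
      ∃ C > (0 : ℝ), ∀ᶠ a in 𝓝 (0 : 𝔸),
        ‖J a - NormedSpace.exp (-((1 / 2 : ℝ) • a)) * (1 + (1 / 24 : ℝ) • a ^ 2)‖ ≤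
          C * ‖a‖ ^ 4 := by
  constructor
  · -- summability for every `a`
    intro a
    refine Summable.of_nonneg_of_le (fun k => norm_nonneg _) (fun k => ?_)
      (((Real.summable_pow_div_factorial ‖a‖)).mul_left (max ‖(1 : 𝔸)‖ 1))
    have hM : (0:ℝ) ≤ max ‖(1 : 𝔸)‖ 1 := le_trans zero_le_one (le_max_right _ _)
    calc ‖((-1 : ℝ) ^ k / ((k + 1)! : ℝ)) • a ^ k‖
        = |(-1 : ℝ) ^ k / ((k + 1)! : ℝ)| * ‖a ^ k‖ := by rw [norm_smul, Real.norm_eq_abs]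
    _ ≤ (1 / (k ! : ℝ)) * (max ‖(1 : 𝔸)‖ 1 * ‖a‖ ^ k) := by
        refine mul_le_mul ?_ (aux_norm_pow_le a k) (norm_nonneg _) (by positivity)
        rw [aux_abs_c1]
        have hle : (k ! : ℝ) ≤ ((k + 1)! : ℝ) := by
          exact_mod_cast Nat.factorial_le (Nat.le_succ k)
        exact one_div_le_one_div_of_le (by positivity) hle
    _ = max ‖(1 : 𝔸)‖ 1 * (‖a‖ ^ k / (k ! : ℝ)) := by ring
  · -- the big-O bound
    set T1 : ℝ := ∑' k : ℕ, |(-1 : ℝ) ^ (k + 4) / (((k + 4) + 1)! : ℝ)| with hT1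
    set T2 : ℝ := ∑' k : ℕ, |(-(1/2) : ℝ) ^ (k + 4) / ((k + 4)! : ℝ)| with hT2
    have hT1nn : 0 ≤ T1 := tsum_nonneg fun k => abs_nonneg _
    have hT2nn : 0 ≤ T2 := tsum_nonneg fun k => abs_nonneg _
    set MG : ℝ := ‖(1 : 𝔸)‖ + 1/24 with hMG
    have hMGnn : 0 ≤ MG := by positivity
    refine ⟨T1 + T2 * MG + 1, by positivity, ?_⟩
    filter_upwards [Metric.closedBall_mem_nhds (0 : 𝔸) one_pos] with a hmem
    have ha : ‖a‖ ≤ 1 := by simpa [Metric.mem_closedBall, dist_zero_right] using hmem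
    rw [hJ a, aux_exp_eq a]
    set P : 𝔸 := ∑ k ∈ Finset.range 4, ((-1 : ℝ) ^ k / ((k + 1)! : ℝ)) • a ^ k with hP
    set Q : 𝔸 := ∑ k ∈ Finset.range 4, ((-(1/2) : ℝ) ^ k / (k ! : ℝ)) • a ^ k with hQ
    set S1 : 𝔸 := ∑' k : ℕ, ((-1 : ℝ) ^ k / ((k + 1)! : ℝ)) • a ^ k with hS1
    set S2 : 𝔸 := ∑' k : ℕ, ((-(1/2) : ℝ) ^ k / (k ! : ℝ)) • a ^ k with hS2
    set G : 𝔸 := 1 + (1/24 : ℝ) • a ^ 2 with hG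
    have split : S1 - S2 * G = (S1 - P) - (S2 - Q) * G + (P - Q * G) := by
      rw [sub_mul]; abel
    have hpoly : P - Q * G = (-(1/192) : ℝ) • a ^ 4 + (1/1152 : ℝ) • a ^ 5 := aux_poly a
    have h1 : ‖S1 - P‖ ≤ T1 * ‖a‖ ^ 4 := tail_bound _ aux_summable_c1 a ha
    have h2 : ‖S2 - Q‖ ≤ T2 * ‖a‖ ^ 4 := tail_bound _ aux_summable_c2 a ha
    have hGnorm : ‖G‖ ≤ MG := by
      rw [hG, hMG]
      refine (norm_add_le _ _).trans ?_
      gcongr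
      rw [norm_smul, Real.norm_eq_abs]
      have : ‖a ^ 2‖ ≤ 1 := (norm_pow_le' a two_pos).trans (pow_le_one₀ (norm_nonneg a) ha)
      calc |(1/24 : ℝ)| * ‖a ^ 2‖ ≤ |(1/24 : ℝ)| * 1 :=
            mul_le_mul_of_nonneg_left this (abs_nonneg _)
      _ = 1/24 := by norm_num
    have ha4 : ‖a ^ 4‖ ≤ ‖a‖ ^ 4 := norm_pow_le' a (by norm_num)
    have ha5 : ‖a ^ 5‖ ≤ ‖a‖ ^ 4 := by
      refine (norm_pow_le' a (by norm_num)).trans ?_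
      calc ‖a‖ ^ 5 = ‖a‖ ^ 4 * ‖a‖ := by ring
      _ ≤ ‖a‖ ^ 4 * 1 := mul_le_mul_of_nonneg_left ha (pow_nonneg (norm_nonneg a) 4)
      _ = ‖a‖ ^ 4 := mul_one _
    have hZ : ‖(-(1/192) : ℝ) • a ^ 4 + (1/1152 : ℝ) • a ^ 5‖ ≤ 1 * ‖a‖ ^ 4 := by
      refine (norm_add_le _ _).trans ?_
      rw [norm_smul, norm_smul, Real.norm_eq_abs, Real.norm_eq_abs]
      have h4nn : (0:ℝ) ≤ ‖a‖ ^ 4 := pow_nonneg (norm_nonneg a) 4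
      have e1 : |(-(1/192) : ℝ)| = 1/192 := by rw [abs_neg]; exact abs_of_nonneg (by norm_num)
      have e2 : |(1/1152 : ℝ)| = 1/1152 := abs_of_nonneg (by norm_num)
      rw [e1, e2]
      nlinarith [ha4, ha5, norm_nonneg (a ^ 4), norm_nonneg (a ^ 5)]
    rw [split, hpoly]
    calc ‖(S1 - P) - (S2 - Q) * G + ((-(1/192) : ℝ) • a ^ 4 + (1/1152 : ℝ) • a ^ 5)‖
        ≤ ‖(S1 - P) - (S2 - Q) * G‖ + ‖(-(1/192) : ℝ) • a ^ 4 + (1/1152 : ℝ) • a ^ 5‖ :=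
          norm_add_le _ _
    _ ≤ (‖S1 - P‖ + ‖(S2 - Q) * G‖) + 1 * ‖a‖ ^ 4 :=
        add_le_add (norm_sub_le _ _) hZ
    _ ≤ (T1 * ‖a‖ ^ 4 + (T2 * ‖a‖ ^ 4) * MG) + 1 * ‖a‖ ^ 4 := by
        gcongr
        refine (norm_mul_le _ _).trans ?_
        exact mul_le_mul h2 hGnorm (norm_nonneg _) (by positivity)
    _ = (T1 + T2 * MG + 1) * ‖a‖ ^ 4 := by ring
end

section
/- Let d be a positive natural number and let S and Σ be real symmetric positive definite d×d matrices. Then trace(Σ^{-1} S) - Real.log (det(Σ^{-1} S)) ≥ d, with equality if and only if Σ = S. Equivalently, Real.log (det Σ) + trace(Σ^{-1} S) ≥ Real.log (det S) + d, with equality if and only if Σ = S. -/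
open Matrix

private lemma trace_eq_sum_eigs {d : ℕ} (M : Matrix (Fin d) (Fin d) ℝ) (hH : M.IsHermitian) :
    M.trace = ∑ i, hH.eigenvalues i := by
  conv_lhs => rw [hH.spectral_theorem]
  rw [Unitary.conjStarAlgAut_apply, trace_mul_cycle, Unitary.coe_star_mul_self]
  simp [trace_diagonal]

private lemma eq_one_of_eigs_one {d : ℕ} (M : Matrix (Fin d) (Fin d) ℝ) (hH : M.IsHermitian)
    (h : ∀ i, hH.eigenvalues i = 1) : M = 1 := by
  rw [hH.spectral_theorem]
  have h1 : diagonal (RCLike.ofReal ∘ hH.eigenvalues) = (1 : Matrix (Fin d) (Fin d) ℝ) := by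
    ext i j
    rcases eq_or_ne i j with rfl | hij
    · simp [diagonal_apply_eq, h, Matrix.one_apply]
    · simp [diagonal_apply_ne _ hij, Matrix.one_apply, hij]
  rw [h1, map_one]

/-- For symmetric positive definite `d × d` real matrices `S` and `C`,
`trace (C⁻¹ * S) - log (det (C⁻¹ * S)) ≥ d`, with equality iff `C = S`; equivalently,
`log (det C) + trace (C⁻¹ * S) ≥ log (det S) + d`, with equality iff `C = S`.  This is the
critical-point computation for the covariance in the KL divergence to a Gaussian. -/
theorem trace_sub_log_det_ge (d : ℕ) (hd : 0 < d)
    (S C : Matrix (Fin d) (Fin d) ℝ) (hS : S.PosDef) (hC : C.PosDef) :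
    ((d : ℝ) ≤ (C⁻¹ * S).trace - Real.log (C⁻¹ * S).det ∧
      ((C⁻¹ * S).trace - Real.log (C⁻¹ * S).det = (d : ℝ) ↔ C = S)) ∧
    (Real.log S.det + (d : ℝ) ≤ Real.log C.det + (C⁻¹ * S).trace ∧
      (Real.log C.det + (C⁻¹ * S).trace = Real.log S.det + (d : ℝ) ↔ C = S)) := by
  have hCi : (C⁻¹).PosDef := hC.inv
  open scoped MatrixOrder in
  set R := CFC.sqrt (C⁻¹) with hRdef
  open scoped MatrixOrder in
  have hRps : R.PosSemidef := (CFC.sqrt_nonneg _).posSemidef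
  open scoped MatrixOrder in
  have hRR : R * R = C⁻¹ := CFC.sqrt_mul_sqrt_self _ hCi.posSemidef.nonneg
  set M := R * S * R with hMdef
  have hMps : M.PosSemidef := by
    have := hS.posSemidef.mul_mul_conjTranspose_same R
    rwa [hRps.isHermitian.eq] at this
  have hH : M.IsHermitian := hMps.isHermitian
  -- determinants
  have hdetR : R.det * R.det = (C⁻¹).det := by
    have := congrArg det hRR; rwa [det_mul] at this
  have hdetCi : 0 < (C⁻¹).det := hCi.det_pos
  have hdetM : M.det = (C⁻¹).det * S.det := by
    rw [hMdef, det_mul, det_mul, ← hdetR]; ring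
  have hdetM' : M.det = (C⁻¹ * S).det := by rw [hdetM, det_mul]
  have hdetMpos : 0 < M.det := by rw [hdetM]; exact mul_pos hdetCi hS.det_pos
  -- trace
  have htrM : M.trace = (C⁻¹ * S).trace := by
    rw [hMdef, trace_mul_cycle, hRR]
  -- eigenvalues
  set lam := hH.eigenvalues with hlam
  have hdetprod : M.det = ∏ i, lam i := by
    have := hH.det_eq_prod_eigenvalues
    simpa using this
  have hpos : ∀ i, 0 < lam i := by
    intro i
    rcases lt_or_eq_of_le (hMps.eigenvalues_nonneg i) with h | h
    · exact h
    · exfalso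
      have : M.det = 0 := by
        rw [hdetprod]
        exact Finset.prod_eq_zero (Finset.mem_univ i) h.symm
      exact hdetMpos.ne' this
  have htrsum : M.trace = ∑ i, lam i := trace_eq_sum_eigs M hH
  have hlogdet : Real.log M.det = ∑ i, Real.log (lam i) := by
    rw [hdetprod, Real.log_prod fun i _ => (hpos i).ne']
  -- the key quantity
  have hkey : M.trace - Real.log M.det = ∑ i, (lam i - Real.log (lam i)) := by
    rw [htrsum, hlogdet, Finset.sum_sub_distrib]
  have h1le : ∀ i : Fin d, (1 : ℝ) ≤ lam i - Real.log (lam i) := fun i => by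
    have := Real.log_le_sub_one_of_pos (hpos i); linarith
  have hge : (d : ℝ) ≤ M.trace - Real.log M.det := by
    rw [hkey]
    calc (d : ℝ) = ∑ _i : Fin d, (1 : ℝ) := by simp
    _ ≤ _ := Finset.sum_le_sum fun i _ => h1le i
  -- equality implies all eigenvalues are 1
  have heqone : M.trace - Real.log M.det = (d : ℝ) → M = 1 := by
    intro heq
    have hall : ∀ i, lam i = 1 := by
      by_contra hne
      push_neg at hne
      obtain ⟨j, hj⟩ := hne
      have hstrict : (d : ℝ) < ∑ i, (lam i - Real.log (lam i)) := by
        have := Real.log_lt_sub_one_of_pos (hpos j) hj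
        calc (d : ℝ) = ∑ _i : Fin d, (1 : ℝ) := by simp
        _ < _ := Finset.sum_lt_sum (fun i _ => h1le i) ⟨j, Finset.mem_univ j, by linarith⟩
      rw [hkey] at heq; linarith
    exact eq_one_of_eigs_one M hH hall
  -- M = 1 implies C = S
  have hdetRne : R.det ≠ 0 := by
    intro h; rw [h, mul_zero] at hdetR; exact hdetCi.ne' hdetR.symm
  have hMone : M = 1 → C = S := by
    intro h
    have hSRR : S = R⁻¹ * R⁻¹ := by
      have h2 : R⁻¹ * (R * S * R) * R⁻¹ = R⁻¹ * R⁻¹ := by rw [← hMdef, h, mul_one]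
      calc S = (R⁻¹ * R) * S * (R * R⁻¹) := by
              rw [nonsing_inv_mul R (isUnit_iff_ne_zero.mpr hdetRne), mul_nonsing_inv R (isUnit_iff_ne_zero.mpr hdetRne), one_mul, mul_one]
      _ = R⁻¹ * (R * S * R) * R⁻¹ := by simp only [mul_assoc]
      _ = R⁻¹ * R⁻¹ := h2
    have : S = C := by
      rw [hSRR, ← Matrix.mul_inv_rev, hRR, Matrix.nonsing_inv_nonsing_inv C (isUnit_iff_ne_zero.mpr hC.det_pos.ne')]
    exact this.symm
  -- C = S implies equality
  have hCS : C = S → (C⁻¹ * S).trace - Real.log (C⁻¹ * S).det = (d : ℝ) := by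
    rintro rfl
    rw [nonsing_inv_mul C (isUnit_iff_ne_zero.mpr hC.det_pos.ne')]
    simp [trace_one]
  -- assemble first conjunct
  have hge' : (d : ℝ) ≤ (C⁻¹ * S).trace - Real.log (C⁻¹ * S).det := by
    rwa [htrM, hdetM'] at hge
  have hiff : (C⁻¹ * S).trace - Real.log (C⁻¹ * S).det = (d : ℝ) ↔ C = S := by
    constructor
    · intro h
      apply hMone
      apply heqone
      rwa [htrM, hdetM']
    · exact hCS
  -- second conjunct via log algebra
  have hlog2 : Real.log (C⁻¹ * S).det = Real.log S.det - Real.log C.det := by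
    have hdetCinv : (C⁻¹).det = (C.det)⁻¹ := by
      rw [det_nonsing_inv, Ring.inverse_eq_inv']
    rw [det_mul, hdetCinv, Real.log_mul (inv_ne_zero hC.det_pos.ne') hS.det_pos.ne',
      Real.log_inv]
    ring
  refine ⟨⟨hge', hiff⟩, ?_, ?_⟩
  · rw [hlog2] at hge'; linarith
  · rw [← hiff, hlog2]; constructor <;> intro h <;> linarith
end

section
/- Let u ∈ ℝ^3 be nonzero, let θ := ‖u‖ (Euclidean norm), and let U be the 3×3 real matrix with U v = u × v for all v ∈ ℝ^3 (the cross-product matrix; U is skew-symmetric with entries U = [[0, -u_3, u_2], [u_3, 0, -u_1], [-u_2, u_1, 0]]). Then ∑_{k=0}^∞ ((-1)^k/(k+1)!) • U^k = I - ((1 - cos θ)/θ^2) • U + ((θ - sin θ)/θ^3) • U^2, where the series converges absolutely. -/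
open scoped Nat
open Matrix

attribute [local instance] Matrix.frobeniusNormedAddCommGroup Matrix.frobeniusNormedRing
  Matrix.frobeniusNormedAlgebra

/-- Closed form of the left-trivialised Jacobian of the exponential map of `SO(3)`: for a
nonzero `u ∈ ℝ³` with `θ = ‖u‖` and cross-product matrix `U` (so `U v = u × v`),
`∑ ((-1)^k/(k+1)!) • U^k = I - ((1 - cos θ)/θ²) • U + ((θ - sin θ)/θ³) • U²`, the series
converging absolutely. -/
theorem so3_jacobian_closed_form (u : EuclideanSpace ℝ (Fin 3)) (hu : u ≠ 0)
    (U : Matrix (Fin 3) (Fin 3) ℝ)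
    (hU : ∀ v : Fin 3 → ℝ, U *ᵥ v = crossProduct (WithLp.equiv 2 (Fin 3 → ℝ) u) v)
    (hU' : U = !![0, -u 2, u 1; u 2, 0, -u 0; -u 1, u 0, 0]) :
    (Summable fun k : ℕ => ‖((-1 : ℝ) ^ k / ((k + 1)! : ℝ)) • U ^ k‖) ∧
      ∑' k : ℕ, ((-1 : ℝ) ^ k / ((k + 1)! : ℝ)) • U ^ k =
        1 - ((1 - Real.cos ‖u‖) / ‖u‖ ^ 2) • U + ((‖u‖ - Real.sin ‖u‖) / ‖u‖ ^ 3) • U ^ 2 := by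
  have hθ : (0:ℝ) < ‖u‖ := norm_pos_iff.mpr hu
  set θ := ‖u‖ with hθdef
  set f : ℕ → Matrix (Fin 3) (Fin 3) ℝ :=
    fun k => ((-1 : ℝ) ^ k / ((k + 1)! : ℝ)) • U ^ k with hfdef
  -- cube identity
  have hθ2 : θ^2 = u 0 ^2 + u 1 ^2 + u 2 ^2 := by
    rw [hθdef, EuclideanSpace.norm_eq, Real.sq_sqrt (by positivity)]
    simp [Fin.sum_univ_three, Real.norm_eq_abs, sq_abs]
  have hcube : U ^ 3 = (-θ^2) • U := by
    rw [hθ2]; subst hU'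
    ext i j
    fin_cases i <;> fin_cases j <;>
      simp [pow_succ, Matrix.mul_apply, Fin.sum_univ_three] <;> ring
  have hodd : ∀ m : ℕ, U ^ (2*m+1) = ((-θ^2)^m) • U := by
    intro m; induction m with
    | zero => simp
    | succ n ih =>
      have h2 : 2*(n+1)+1 = (2*n+1) + 2 := by ring
      rw [h2, pow_add, ih, smul_mul_assoc, show U * U^2 = U^3 from (pow_succ' U 2).symm,
        hcube, smul_smul, ← pow_succ]
  have heven : ∀ m : ℕ, U ^ (2*m+2) = ((-θ^2)^m) • U^2 := by
    intro m
    rw [show 2*m+2 = (2*m+1)+1 from rfl, pow_succ, hodd, smul_mul_assoc, ← pow_two]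
  -- summability
  have hnormpow : ∀ k : ℕ, ‖U ^ k‖ ≤ ‖(1 : Matrix (Fin 3) (Fin 3) ℝ)‖ * ‖U‖ ^ k := by
    intro k; induction k with
    | zero => simp
    | succ n ih =>
      rw [pow_succ, pow_succ, ← mul_assoc]
      exact (norm_mul_le _ _).trans (mul_le_mul_of_nonneg_right ih (norm_nonneg U))
  have hsum : Summable fun k : ℕ => ‖f k‖ := by
    apply Summable.of_nonneg_of_le (fun k => norm_nonneg _) ?_
      ((Real.summable_pow_div_factorial ‖U‖).mul_left ‖(1 : Matrix (Fin 3) (Fin 3) ℝ)‖)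
    intro k
    rw [hfdef, norm_smul]
    have h1 : ‖(-1:ℝ)^k / ((k+1)! : ℝ)‖ ≤ 1 / (k ! : ℝ) := by
      rw [Real.norm_eq_abs, abs_div, abs_pow, abs_neg, abs_one, one_pow,
        abs_of_nonneg (by positivity)]
      apply one_div_le_one_div_of_le (by positivity)
      exact_mod_cast Nat.factorial_le (Nat.le_succ k)
    calc ‖(-1:ℝ)^k / ((k+1)! : ℝ)‖ * ‖U ^ k‖
        ≤ (1 / (k ! : ℝ)) * (‖(1 : Matrix (Fin 3) (Fin 3) ℝ)‖ * ‖U‖ ^ k) :=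
          mul_le_mul h1 (hnormpow k) (norm_nonneg _) (by positivity)
      _ = ‖(1 : Matrix (Fin 3) (Fin 3) ℝ)‖ * (‖U‖ ^ k / (k ! : ℝ)) := by ring
  refine ⟨hsum, ?_⟩
  have hf : Summable f := hsum.of_norm
  -- scalar series
  set c : ℕ → ℝ := fun m => -((-θ^2)^m) / ((2*m+2)! : ℝ) with hcdef
  set d : ℕ → ℝ := fun m => ((-θ^2)^m) / ((2*m+3)! : ℝ) with hddef
  have hgsum : Summable fun n : ℕ => |(-1:ℝ)^n * θ^(2*n) / ((2*n)! : ℝ)| :=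
    (Real.hasSum_cos θ).summable.abs
  have habs : ∀ n : ℕ, |(-1:ℝ)^n * θ^(2*n) / ((2*n)! : ℝ)| = θ^(2*n) / ((2*n)! : ℝ) := by
    intro n
    rw [abs_div, abs_mul, abs_pow, abs_neg, abs_one, one_pow, one_mul, abs_pow,
      abs_of_nonneg hθ.le, abs_of_nonneg (by positivity)]
  have hcsum : Summable c := by
    apply Summable.of_norm
    apply Summable.of_nonneg_of_le (fun n => norm_nonneg _) ?_ hgsum
    intro n
    rw [habs]
    have h1 : ‖c n‖ = θ^(2*n) / ((2*n+2)! : ℝ) := by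
      rw [hcdef, Real.norm_eq_abs, abs_div, abs_neg, abs_pow, abs_neg,
        abs_of_nonneg (sq_nonneg θ), ← pow_mul, Nat.abs_cast]
    rw [h1]
    gcongr
    omega
  have hdsum : Summable d := by
    apply Summable.of_norm
    apply Summable.of_nonneg_of_le (fun n => norm_nonneg _) ?_ hgsum
    intro n
    rw [habs]
    have h1 : ‖d n‖ = θ^(2*n) / ((2*n+3)! : ℝ) := by
      rw [hddef, Real.norm_eq_abs, abs_div, abs_pow, abs_neg,
        abs_of_nonneg (sq_nonneg θ), ← pow_mul, Nat.abs_cast]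
    rw [h1]
    gcongr
    omega
  have hcval : ∑' m, c m = (Real.cos θ - 1) / θ^2 := by
    have hg : Summable fun n : ℕ => (-1:ℝ)^n * θ^(2*n) / ((2*n)! : ℝ) :=
      (Real.hasSum_cos θ).summable
    have hshift : ∀ n : ℕ, (-1:ℝ)^(n+1) * θ^(2*(n+1)) / ((2*(n+1))! : ℝ) = θ^2 * c n := by
      intro n
      have h2 : 2*(n+1) = 2*n+2 := by ring
      rw [h2, hcdef]
      ring
    have := Summable.tsum_eq_zero_add hg
    rw [← Real.cos_eq_tsum] at this
    simp only [hshift] at this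
    rw [tsum_mul_left] at this
    norm_num at this
    rw [eq_div_iff (ne_of_gt (by positivity : (0:ℝ) < θ^2))]
    linarith
  have hdval : ∑' m, d m = (θ - Real.sin θ) / θ^3 := by
    have hg : Summable fun n : ℕ => (-1:ℝ)^n * θ^(2*n+1) / ((2*n+1)! : ℝ) :=
      (Real.hasSum_sin θ).summable
    have hshift : ∀ n : ℕ, (-1:ℝ)^(n+1) * θ^(2*(n+1)+1) / ((2*(n+1)+1)! : ℝ) = -(θ^3 * d n) := by
      intro n
      have h2 : 2*(n+1)+1 = 2*n+3 := by ring
      rw [h2, hddef]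
      ring
    have := Summable.tsum_eq_zero_add hg
    rw [← Real.sin_eq_tsum] at this
    simp only [hshift] at this
    rw [tsum_neg, tsum_mul_left] at this
    norm_num at this
    rw [eq_div_iff (ne_of_gt (by positivity : (0:ℝ) < θ^3))]
    linarith
  -- matrix series terms
  have hfodd : ∀ m : ℕ, f (2*m+1) = c m • U := by
    intro m
    rw [hfdef]
    simp only [hodd m, smul_smul, hcdef]
    congr 1
    rw [Odd.neg_one_pow ⟨m, by ring⟩]
    have h2 : 2*m+1+1 = 2*m+2 := by ring
    rw [h2]
    ring
  have hfeven : ∀ m : ℕ, f (2*m+1+1) = d m • U^2 := by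
    intro m
    have h2 : 2*m+1+1 = 2*m+2 := by omega
    rw [hfdef, h2]
    simp only [heven m, smul_smul, hddef]
    congr 1
    rw [Even.neg_one_pow ⟨m+1, by ring⟩]
    have h3 : 2*m+2+1 = 2*m+3 := by ring
    rw [h3]
    ring
  -- split the sum
  have hf1 : Summable fun k => f (k+1) := hf.comp_injective (add_left_injective 1)
  have hfo : Summable fun m => f (2*m+1) := hf.comp_injective (fun a b h => by omega)
  have hfe : Summable fun m => f (2*m+1+1) := hf.comp_injective (fun a b h => by omega)
  have hsplit : ∑' k, f k = f 0 + (∑' m, f (2*m+1) + ∑' m, f (2*m+1+1)) := by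
    rw [Summable.tsum_eq_zero_add hf]
    congr 1
    exact (tsum_even_add_odd (f := fun k => f (k+1)) hfo hfe).symm
  have hf0 : f 0 = 1 := by simp [hfdef]
  calc ∑' k, f k = 1 + ((Real.cos θ - 1) / θ^2) • U + ((θ - Real.sin θ) / θ^3) • U^2 := by
        rw [hsplit, hf0]
        simp only [hfodd, hfeven]
        rw [Summable.tsum_smul_const hcsum, Summable.tsum_smul_const hdsum, hcval, hdval, add_assoc]
    _ = 1 - ((1 - Real.cos θ) / θ^2) • U + ((θ - Real.sin θ) / θ^3) • U^2 := by
        rw [show (Real.cos θ - 1) / θ^2 = -((1 - Real.cos θ) / θ^2) by ring, neg_smul,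
          ← sub_eq_add_neg]
end
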